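/- In the class-kernel setting, π is a stationary distribution of the class kernel K_f: for every A ∈ Σ, π(A) = ∫_T K_f(t, A) π(dt). -/

import Mathlib

open MeasureTheory ProbabilityTheory Filter

universe u v

noncomputable section

/-- The `n`-th iterate of a Markov transition kernel: `kiter K 0` is the identity kernel and
`kiter K (n+1) (s, A) = ∫ K(s', A) (kiter K n)(s, ds')`, so `kiter K n = K^n` for `n ≥ 1`. -/
def kiter {S : Type u} [MeasurableSpace S] (K : Kernel S S) : ℕ → Kernel S S
  | 0 => Kernel.id
  | n + 1 => K ∘ₖ kiter K n

/-- `K` is `π`-irreducible: from every point, every set of positive `π`-measure is reached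
with positive probability after some number `n ≥ 1` of steps. -/
def PiIrreducible {S : Type u} [MeasurableSpace S] (K : Kernel S S) (π : Measure S) : Prop :=
  ∀ s : S, ∀ A : Set S, MeasurableSet A → 0 < π A → ∃ n : ℕ, 1 ≤ n ∧ 0 < kiter K n s A

/-- `π` is a stationary distribution of `K`: `∫ K(s, A) π(ds) = π(A)` for all measurable `A`. -/
def StationaryFor {S : Type u} [MeasurableSpace S] (K : Kernel S S) (π : Measure S) : Prop :=
  ∀ A : Set S, MeasurableSet A → ∫⁻ s, K s A ∂π = π A

/-- `K` is periodic relative to `π`: there are `d ≥ 2` pairwise disjoint nonempty measurable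
sets `E_0, …, E_{d-1}` and a `π`-null measurable set `N` covering `S` such that from `E_i` the
kernel moves to `E_{(i+1) mod d}` with probability one. -/
def PeriodicK {S : Type u} [MeasurableSpace S] (K : Kernel S S) (π : Measure S) : Prop :=
  ∃ d : ℕ, ∃ hd : 2 ≤ d, ∃ E : Fin d → Set S, ∃ N : Set S,
    (∀ i, MeasurableSet (E i)) ∧ MeasurableSet N ∧ (∀ i, (E i).Nonempty) ∧
    Pairwise (fun i j => Disjoint (E i) (E j)) ∧
    (⋃ i, E i) ∪ N = Set.univ ∧ π N = 0 ∧
    ∀ i : Fin d, ∀ s ∈ E i, K s (E ⟨(i.1 + 1) % d, Nat.mod_lt _ (by omega)⟩) = 1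

/-- `K` is aperiodic relative to `π` if it is not periodic. -/
def AperiodicK {S : Type u} [MeasurableSpace S] (K : Kernel S S) (π : Measure S) : Prop :=
  ¬ PeriodicK K π

/-- Total variation norm of a (bounded signed) set function:
`‖λ‖ = sup_{A measurable} λ(A) − inf_{A measurable} λ(A)`. -/
def tvnorm {S : Type u} [MeasurableSpace S] (lam : Set S → ℝ) : ℝ :=
  (⨆ A : {A : Set S // MeasurableSet A}, lam A.1) - (⨅ A : {A : Set S // MeasurableSet A}, lam A.1)

/-- The iterates of `K` started at `s` converge to `π` in total variation norm:
`lim_{n→∞} ‖K^n(s, ·) − π‖ = 0`. -/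
def TVConvergesTo {S : Type u} [MeasurableSpace S] (K : Kernel S S) (π : Measure S) (s : S) : Prop :=
  Tendsto (fun n : ℕ => tvnorm (fun A => (kiter K (n + 1) s A).toReal - (π A).toReal))
    atTop (nhds 0)

/-- The data of the class-kernel setting for a single class function `f` on a probability
space `(T, Σ, π)`: a countable index set `I`, families of measurable spaces `(X i, 𝒳 i)` and
`(Y i, 𝒴 i)` whose disjoint union forms the generalized product space `C = ⨆ i, X i × Y i`,
an injective two-way measurable class function `f : T → C`, regular conditional probabilities
`v i : X i × 𝒴 i → [0,1]` disintegrating the (conditioned) pushforward `f_*π` on each class,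
parameterized Markov transition kernels `K i x` on `(Y i, 𝒴 i)` measurable in `x`, and the
resulting class kernel `Kf` on `(T, Σ)` given by
`Kf(t, A) = (K i x)(y, {y' | ⟨x, y'⟩ ∈ f(A)})` where `f(t) = ⟨i, x, y⟩`. -/
structure ClassKernelData (T : Type u) [MeasurableSpace T] (π : Measure T) where
  /-- the countable index set -/
  (I : Type v)
  [countI : Countable I]
  /-- the `X`-components of the generalized product space -/
  (X : I → Type v)
  /-- the `Y`-components of the generalized product space -/
  (Y : I → Type v)
  [mX : ∀ i, MeasurableSpace (X i)]
  [mY : ∀ i, MeasurableSpace (Y i)]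
  /-- the class function `f : T → C = ⨆ i, X i × Y i` -/
  f : T → Σ i : I, X i × Y i
  f_inj : Function.Injective f
  f_meas : Measurable f
  /-- `f` is two-way measurable: images of measurable sets are measurable -/
  f_image : ∀ A : Set T, MeasurableSet A → MeasurableSet (f '' A)
  /-- the regular conditional probabilities `v i : X i × 𝒴 i → [0,1]` -/
  v : ∀ i, X i → Measure (Y i)
  v_prob : ∀ i x, IsProbabilityMeasure (v i x)
  v_meas : ∀ i (V : Set (Y i)), MeasurableSet V → Measurable fun x => v i x V
  /-- the disintegration property: for each class `i` of positive `f_*π`-mass,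
  `(f_*π)_i(U × V) = ∫_U v_i(x, V) (f_*π)_i(dx × Y_i)` (stated in unnormalized form, which is
  equivalent since the normalizing constant appears identically on both sides) -/
  v_eq : ∀ i : I, 0 < π.map f (Set.range (Sigma.mk i)) →
    ∀ (U : Set (X i)) (V : Set (Y i)), MeasurableSet U → MeasurableSet V →
      (π.map f).comap (Sigma.mk i) (U ×ˢ V)
        = ∫⁻ x in U, v i x V ∂(((π.map f).comap (Sigma.mk i)).map Prod.fst)
  /-- the parameterized Markov transition kernels `K i x` on `(Y i, 𝒴 i)` -/
  K : ∀ i, X i → Kernel (Y i) (Y i)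
  K_markov : ∀ i x, IsMarkovKernel (K i x)
  K_meas : ∀ i (y : Y i) (V : Set (Y i)), MeasurableSet V → Measurable fun x => K i x y V
  /-- the class kernel `Kf` on `(T, Σ)` -/
  Kf : Kernel T T
  Kf_markov : IsMarkovKernel Kf
  /-- the class kernel is given by `Kf(t, A) = (K i x)(y, {y' ∈ Y i | ⟨x, y'⟩ ∈ f(A)})`
  where `f(t) = ⟨i, x, y⟩` -/
  Kf_eq : ∀ (t : T) (A : Set T), MeasurableSet A → ∀ (i : I) (x : X i) (y : Y i),
    f t = ⟨i, (x, y)⟩ →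
      Kf t A = K i x y {y' : Y i | (⟨i, (x, y')⟩ : Σ j : I, X j × Y j) ∈ f '' A}

attribute [instance] ClassKernelData.countI ClassKernelData.mX ClassKernelData.mY

/-- The projection `f_x` of a class function onto the `X`-components. -/
def ClassKernelData.fx {T : Type u} [MeasurableSpace T] {π : Measure T}
    (d : ClassKernelData T π) : T → Σ i : d.I, d.X i :=
  fun t => ⟨(d.f t).1, (d.f t).2.1⟩

section SigmaAux

universe w

variable {ι : Type w} {β : ι → Type w} [∀ i, MeasurableSpace (β i)]

theorem measurableSet_sigma_iff' {s : Set (Σ i, β i)} :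
    MeasurableSet s ↔ ∀ i, MeasurableSet (Sigma.mk i ⁻¹' s) := by
  show MeasurableSet[⨅ i, MeasurableSpace.map (Sigma.mk i) _] s ↔ _
  rw [MeasurableSpace.measurableSet_iInf]
  exact Iff.rfl

theorem measurable_sigmaMk' (i : ι) : Measurable (@Sigma.mk ι β i) := fun _s hs =>
  measurableSet_sigma_iff'.1 hs i

theorem measurableEmbedding_sigmaMk' (i : ι) : MeasurableEmbedding (@Sigma.mk ι β i) := by
  refine ⟨sigma_mk_injective, measurable_sigmaMk' i, fun s hs => ?_⟩
  rw [measurableSet_sigma_iff']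
  intro j
  rcases eq_or_ne j i with rfl | hne
  · rw [Set.preimage_image_eq s sigma_mk_injective]
    exact hs
  · have : Sigma.mk j ⁻¹' (Sigma.mk i '' s) = ∅ := by
      ext y
      simp only [Set.mem_preimage, Set.mem_image, Set.mem_empty_iff_false, iff_false]
      rintro ⟨x, -, h⟩
      exact hne (congrArg Sigma.fst h).symm
    rw [this]
    exact MeasurableSet.empty

end SigmaAux

/-- In the class-kernel setting, `π` is a stationary distribution of the class kernel `K_f`:
for every measurable `A`, `π(A) = ∫_T K_f(t, A) π(dt)`. -/
theorem stmt2 {T : Type u} [MeasurableSpace T] (π : Measure T) [IsProbabilityMeasure π]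
    (d : ClassKernelData.{u, v} T π)
    (hirr : ∀ i x, PiIrreducible (d.K i x) (d.v i x))
    (haper : ∀ i x, AperiodicK (d.K i x) (d.v i x))
    (hstat : ∀ i x, StationaryFor (d.K i x) (d.v i x)) :
    StationaryFor d.Kf π := by
  classical
  intro A hA
  have emb : MeasurableEmbedding d.f := ⟨d.f_inj, d.f_meas, fun {s} hs => d.f_image s hs⟩
  set μ : Measure (Σ j : d.I, d.X j × d.Y j) := π.map d.f with hμdef
  haveI : IsProbabilityMeasure μ := Measure.isProbabilityMeasure_map d.f_meas.aemeasurable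
  set S : Set (Σ j : d.I, d.X j × d.Y j) := d.f '' A with hSdef
  have hS : MeasurableSet S := d.f_image A hA
  have hsig : ∀ i : d.I, MeasurableEmbedding (@Sigma.mk d.I (fun j => d.X j × d.Y j) i) :=
    fun i => measurableEmbedding_sigmaMk' i
  -- the regular conditional probabilities as kernels
  let vk : ∀ i, Kernel (d.X i) (d.Y i) := fun i =>
    ⟨d.v i, Measure.measurable_of_measurable_coe _ (fun s hs => d.v_meas i s hs)⟩
  haveI : ∀ i, IsMarkovKernel (vk i) := fun i => ⟨fun x => d.v_prob i x⟩
  -- the class measures and their X-marginals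
  set μc : ∀ i, Measure (d.X i × d.Y i) := fun i => μ.comap (@Sigma.mk d.I (fun j => d.X j × d.Y j) i) with hμcdef
  set ρ : ∀ i, Measure (d.X i) := fun i => (μc i).map Prod.fst with hρdef
  have hμc_apply : ∀ i (s : Set (d.X i × d.Y i)), μc i s = μ (Sigma.mk i '' s) :=
    fun i s => (hsig i).comap_apply μ s
  haveI hfin : ∀ i, IsFiniteMeasure (μc i) := fun i => ⟨by
    rw [hμc_apply]
    exact lt_of_le_of_lt (measure_mono (Set.subset_univ _)) (measure_lt_top μ _)⟩
  haveI : ∀ i, IsFiniteMeasure (ρ i) := fun i => Measure.isFiniteMeasure_map _ _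
  -- the disintegration identity as a compProd identity
  have key : ∀ i, μc i = (ρ i) ⊗ₘ (vk i) := by
    intro i
    by_cases hpos : 0 < μ (Set.range (Sigma.mk i))
    · refine ext_of_generate_finite _ generateFrom_prod.symm isPiSystem_prod ?_ ?_
      · rintro s ⟨U, hU, V, hV, rfl⟩
        rw [Measure.compProd_apply_prod hU hV]
        exact d.v_eq i hpos U V hU hV
      · rw [Measure.compProd_apply_univ,
          Measure.map_apply measurable_fst MeasurableSet.univ, Set.preimage_univ]
    · have h0 : μc i = 0 := by
        refine Measure.measure_univ_eq_zero.1 ?_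
        rw [hμc_apply, Set.image_univ]
        exact le_antisymm (not_lt.1 hpos) (zero_le)
      have hρ0 : ρ i = 0 := by rw [hρdef]; simp [h0]
      rw [h0, hρ0, Measure.compProd_zero_left]
  -- extend `fun t => Kf t A` to a measurable function on the generalized product space
  obtain ⟨G, hGmeas, hGf⟩ := emb.exists_measurable_extend (d.Kf.measurable_coe hA)
    (fun _ => ⟨0⟩)
  -- class ranges
  set R : d.I → Set (Σ j : d.I, d.X j × d.Y j) := fun i => Set.range (Sigma.mk i) with hRdef
  have hRmeas : ∀ i, MeasurableSet (R i) := fun i => (hsig i).measurableSet_range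
  have hRdisj : Pairwise (Function.onFun Disjoint R) := by
    intro i j hij
    refine Set.disjoint_left.2 ?_
    rintro c ⟨p, rfl⟩ ⟨q, hq⟩
    exact hij (congrArg Sigma.fst hq).symm
  have hRunion : (⋃ i, R i) = Set.univ := by
    ext c
    simp only [Set.mem_iUnion, Set.mem_univ, iff_true, hRdef]
    exact ⟨c.1, c.2, Sigma.eta c⟩
  -- the main per-class computation
  have hclass : ∀ i, ∫⁻ c in R i, G c ∂μ = μ (S ∩ R i) := by
    intro i
    have h1 : ∫⁻ c in R i, G c ∂μ = ∫⁻ p, G ⟨i, p⟩ ∂(μc i) := by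
      rw [hRdef]
      rw [← (hsig i).map_comap μ, (hsig i).lintegral_map]
    have hGi : Measurable fun p : d.X i × d.Y i => G ⟨i, p⟩ :=
      hGmeas.comp (hsig i).measurable
    have hSi : MeasurableSet (@Sigma.mk d.I (fun j => d.X j × d.Y j) i ⁻¹' S) := (hsig i).measurable hS
    -- almost every point of the class is in the range of f
    have hWc : μ (Set.range d.f)ᶜ = 0 := by
      rw [hμdef, Measure.map_apply d.f_meas emb.measurableSet_range.compl]
      have : d.f ⁻¹' (Set.range d.f)ᶜ = ∅ := by
        ext t; simp [Set.mem_range]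
      rw [this, measure_empty]
    have haeμc : ∀ᵐ p ∂(μc i), (⟨i, p⟩ : Σ j : d.I, d.X j × d.Y j) ∈ Set.range d.f := by
      rw [ae_iff]
      rw [hμc_apply]
      refine measure_mono_null ?_ hWc
      rintro c ⟨p, hp, rfl⟩
      exact hp
    have hae : ∀ᵐ x ∂(ρ i), ∀ᵐ y ∂(vk i x),
        (⟨i, (x, y)⟩ : Σ j : d.I, d.X j × d.Y j) ∈ Set.range d.f := by
      refine Measure.ae_ae_of_ae_compProd
        (p := fun q : d.X i × d.Y i => (⟨i, q⟩ : Σ j : d.I, d.X j × d.Y j) ∈ Set.range d.f) ?_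
      rw [← key i]
      exact haeμc
    have hinner : ∀ᵐ x ∂(ρ i), ∫⁻ y, G ⟨i, (x, y)⟩ ∂(vk i x)
        = vk i x (Prod.mk x ⁻¹' (@Sigma.mk d.I (fun j => d.X j × d.Y j) i ⁻¹' S)) := by
      filter_upwards [hae] with x hx
      have hVx : MeasurableSet (Prod.mk x ⁻¹' (@Sigma.mk d.I (fun j => d.X j × d.Y j) i ⁻¹' S)) :=
        measurable_prodMk_left hSi
      have h2 : ∫⁻ y, G ⟨i, (x, y)⟩ ∂(vk i x)
          = ∫⁻ y, d.K i x y (Prod.mk x ⁻¹' (@Sigma.mk d.I (fun j => d.X j × d.Y j) i ⁻¹' S)) ∂(vk i x) := by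
        refine lintegral_congr_ae ?_
        filter_upwards [hx] with y hy
        obtain ⟨t, ht⟩ := hy
        have hGt : G (d.f t) = d.Kf t A := congrFun hGf t
        rw [ht] at hGt
        rw [hGt, d.Kf_eq t A hA i x y ht]
        rfl
      rw [h2]
      exact hstat i x _ hVx
    have h3 : ∫⁻ p, G ⟨i, p⟩ ∂(μc i) = μc i (@Sigma.mk d.I (fun j => d.X j × d.Y j) i ⁻¹' S) := by
      rw [key i, Measure.lintegral_compProd hGi, Measure.compProd_apply hSi]
      exact lintegral_congr_ae hinner
    rw [h1, h3, hμc_apply]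
    congr 1
    rw [Set.image_preimage_eq_inter_range]
  -- put everything together
  have hL : ∫⁻ t, d.Kf t A ∂π = ∫⁻ c, G c ∂μ := by
    rw [hμdef, emb.lintegral_map]
    exact lintegral_congr fun t => (congrFun hGf t).symm
  have hdecomp : ∫⁻ c, G c ∂μ = ∑' i, ∫⁻ c in R i, G c ∂μ := by
    rw [← lintegral_iUnion hRmeas hRdisj, hRunion, Measure.restrict_univ]
  have hsum : ∑' i, μ (S ∩ R i) = μ S := by
    rw [← measure_iUnion ?_ (fun i => hS.inter (hRmeas i))]
    · rw [← Set.inter_iUnion, hRunion, Set.inter_univ]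
    · intro i j hij
      exact (hRdisj hij).mono Set.inter_subset_right Set.inter_subset_right
  calc ∫⁻ t, d.Kf t A ∂π = ∑' i, ∫⁻ c in R i, G c ∂μ := by rw [hL, hdecomp]
    _ = ∑' i, μ (S ∩ R i) := by exact tsum_congr hclass
    _ = μ S := hsum
    _ = π A := by rw [hμdef, Measure.map_apply d.f_meas hS, Set.preimage_image_eq A d.f_inj]
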